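/- For any two unit vectors a, b in ℂ^r with r ≥ 2, there exists a unitary U with U·a = b such that every eigenvalue of U equals 1, exp(iθ), or exp(−iθ), where θ = arccos(Re⟨a,b⟩); hence the maximum absolute eigenangle of U equals arccos(Re⟨a,b⟩). -/

import Mathlib

open Complex Polynomial

private lemma matrix_eq_of_mulVec {m : ℕ} {A B : Matrix (Fin m) (Fin m) ℂ}
    (h : ∀ x, A.mulVec x = B.mulVec x) : A = B := by
  ext i j
  have h2 := congrFun (h (Pi.single j 1)) i
  simpa [Matrix.mulVec_single] using h2

private lemma key {m : ℕ} (a v : Fin m → ℂ) (c β r₂ r₃ : ℂ)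
    (haa : ∑ i, (starRingEnd ℂ) (a i) * a i = 1)
    (hvv : ∑ i, (starRingEnd ℂ) (v i) * v i = 1)
    (hav : ∑ i, (starRingEnd ℂ) (a i) * v i = 0)
    (hn : c * (starRingEnd ℂ) c + β * (starRingEnd ℂ) β = 1)
    (hsum : r₂ + r₃ = c + (starRingEnd ℂ) c) (hprod : r₂ * r₃ = 1) :
    ∃ U ∈ Matrix.unitaryGroup (Fin m) ℂ,
      (U.mulVec a = fun i => c * a i + β * v i) ∧
      (U - r₂ • 1) * ((U - r₃ • 1) * (U - 1)) = 0 := by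
  have hva : ∑ i, (starRingEnd ℂ) (v i) * a i = 0 := by
    have h1 : ∑ i, (starRingEnd ℂ) (v i) * a i
        = (starRingEnd ℂ) (∑ i, (starRingEnd ℂ) (a i) * v i) := by
      rw [map_sum]
      exact Finset.sum_congr rfl fun i _ => by simp [mul_comm]
    rw [h1, hav, map_zero]
  set U : Matrix (Fin m) (Fin m) ℂ := fun i j =>
    (if i = j then 1 else 0)
    + ((c - 1) * a i + β * v i) * (starRingEnd ℂ) (a j)
    + (-(starRingEnd ℂ) β * a i + ((starRingEnd ℂ) c - 1) * v i) * (starRingEnd ℂ) (v j)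
    with hUdef
  -- the action of U
  have hU : ∀ x : Fin m → ℂ, U.mulVec x = fun i =>
      x i + ((c - 1) * (∑ j, (starRingEnd ℂ) (a j) * x j)
              - (starRingEnd ℂ) β * (∑ j, (starRingEnd ℂ) (v j) * x j)) * a i
          + (β * (∑ j, (starRingEnd ℂ) (a j) * x j)
              + ((starRingEnd ℂ) c - 1) * (∑ j, (starRingEnd ℂ) (v j) * x j)) * v i := by
    intro x
    funext i
    show ∑ j, U i j * x j = _
    have e : ∀ j, U i j * x j = (if i = j then x j else 0)
        + ((c - 1) * a i + β * v i) * ((starRingEnd ℂ) (a j) * x j)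
        + (-(starRingEnd ℂ) β * a i + ((starRingEnd ℂ) c - 1) * v i)
            * ((starRingEnd ℂ) (v j) * x j) := by
      intro j
      by_cases h : i = j <;> simp [hUdef, h] <;> ring
    rw [Finset.sum_congr rfl fun j _ => e j, Finset.sum_add_distrib, Finset.sum_add_distrib,
        ← Finset.mul_sum, ← Finset.mul_sum, Finset.sum_ite_eq]
    simp only [Finset.mem_univ, if_true]
    ring
  -- the action of star U
  have hUs : ∀ x : Fin m → ℂ, (star U).mulVec x = fun i =>
      x i + (((starRingEnd ℂ) c - 1) * (∑ j, (starRingEnd ℂ) (a j) * x j)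
              + (starRingEnd ℂ) β * (∑ j, (starRingEnd ℂ) (v j) * x j)) * a i
          + (-β * (∑ j, (starRingEnd ℂ) (a j) * x j)
              + (c - 1) * (∑ j, (starRingEnd ℂ) (v j) * x j)) * v i := by
    intro x
    funext i
    show ∑ j, (star U) i j * x j = _
    have e : ∀ j, (star U) i j * x j = (if i = j then x j else 0)
        + (((starRingEnd ℂ) c - 1) * a i + (-β) * v i) * ((starRingEnd ℂ) (a j) * x j)
        + ((starRingEnd ℂ) β * a i + (c - 1) * v i) * ((starRingEnd ℂ) (v j) * x j) := by
      intro j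
      rw [Matrix.star_apply]
      by_cases h : i = j <;>
        simp [Matrix.star_apply, hUdef, h, Complex.star_def, _root_.map_add, _root_.map_mul,
          _root_.map_sub, _root_.map_one, map_neg, Complex.conj_conj, eq_comm] <;> ring
    rw [Finset.sum_congr rfl fun j _ => e j, Finset.sum_add_distrib, Finset.sum_add_distrib,
        ← Finset.mul_sum, ← Finset.mul_sum, Finset.sum_ite_eq]
    simp only [Finset.mem_univ, if_true]
    ring
  -- expansion of inner products against combinations
  have expand : ∀ (w x : Fin m → ℂ) (s t : ℂ),
      (∑ j, (starRingEnd ℂ) (w j) * (x j + s * a j + t * v j))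
        = (∑ j, (starRingEnd ℂ) (w j) * x j) + s * (∑ j, (starRingEnd ℂ) (w j) * a j)
          + t * (∑ j, (starRingEnd ℂ) (w j) * v j) := by
    intro w x s t
    calc ∑ j, (starRingEnd ℂ) (w j) * (x j + s * a j + t * v j)
        = ∑ j, ((starRingEnd ℂ) (w j) * x j + s * ((starRingEnd ℂ) (w j) * a j)
            + t * ((starRingEnd ℂ) (w j) * v j)) := Finset.sum_congr rfl fun j _ => by ring
      _ = _ := by
          rw [Finset.sum_add_distrib, Finset.sum_add_distrib, ← Finset.mul_sum, ← Finset.mul_sum]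
  have expand0 : ∀ (w : Fin m → ℂ) (s t : ℂ),
      (∑ j, (starRingEnd ℂ) (w j) * (s * a j + t * v j))
        = s * (∑ j, (starRingEnd ℂ) (w j) * a j) + t * (∑ j, (starRingEnd ℂ) (w j) * v j) := by
    intro w s t
    calc ∑ j, (starRingEnd ℂ) (w j) * (s * a j + t * v j)
        = ∑ j, (s * ((starRingEnd ℂ) (w j) * a j) + t * ((starRingEnd ℂ) (w j) * v j)) :=
          Finset.sum_congr rfl fun j _ => by ring
      _ = _ := by rw [Finset.sum_add_distrib, ← Finset.mul_sum, ← Finset.mul_sum]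
  refine ⟨U, ?_, ?_, ?_⟩
  · -- unitarity
    rw [Matrix.mem_unitaryGroup_iff]
    apply matrix_eq_of_mulVec
    intro x
    rw [← Matrix.mulVec_mulVec, hUs x, Matrix.one_mulVec]
    simp only [hU]
    funext i
    rw [expand, expand, haa, hvv, hav, hva]
    linear_combination ((∑ j, (starRingEnd ℂ) (a j) * x j) * a i
      + (∑ j, (starRingEnd ℂ) (v j) * x j) * v i) * hn
  · -- maps a to b
    rw [hU a]
    funext i
    rw [haa, hva]
    ring
  · -- annihilating polynomial
    apply matrix_eq_of_mulVec
    intro x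
    rw [Matrix.zero_mulVec, ← Matrix.mulVec_mulVec, ← Matrix.mulVec_mulVec]
    have hone : (U - 1) = U - (1:ℂ) • 1 := by rw [one_smul]
    have hsub : ∀ (r : ℂ) (y : Fin m → ℂ), (U - r • 1).mulVec y
        = fun i => U.mulVec y i - r * y i := by
      intro r y
      funext i
      simp [Matrix.sub_mulVec, Matrix.smul_mulVec, Matrix.one_mulVec]
    set A := ∑ j, (starRingEnd ℂ) (a j) * x j with hA
    set V := ∑ j, (starRingEnd ℂ) (v j) * x j with hV
    set s1 : ℂ := (c - 1) * A - (starRingEnd ℂ) β * V with hs1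
    set t1 : ℂ := β * A + ((starRingEnd ℂ) c - 1) * V with ht1
    have h1 : (U - 1).mulVec x = fun i => s1 * a i + t1 * v i := by
      rw [hone, hsub]
      simp only [hU]
      funext i
      rw [hs1, ht1, hA, hV]
      ring
    rw [h1]
    set s2 : ℂ := (c - r₃) * s1 - (starRingEnd ℂ) β * t1 with hs2
    set t2 : ℂ := β * s1 + ((starRingEnd ℂ) c - r₃) * t1 with ht2
    have h2 : (U - r₃ • 1).mulVec (fun i => s1 * a i + t1 * v i)
        = fun i => s2 * a i + t2 * v i := by
      rw [hsub]
      simp only [hU]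
      funext i
      rw [expand0, expand0, haa, hav, hvv, hva, hs2, ht2]
      ring
    rw [h2, hsub]
    simp only [hU]
    funext i
    rw [expand0, expand0, haa, hav, hvv, hva]
    simp only [Pi.zero_apply]
    rw [hs2, ht2]
    linear_combination (a i * s1 + v i * t1) * hprod
      + (a i * ((starRingEnd ℂ) β * t1 - c * s1) - v i * (β * s1 + (starRingEnd ℂ) c * t1)) * hsum
      - (a i * s1 + v i * t1) * hn

theorem stmt6 {m : ℕ} (hm : 2 ≤ m) (a b : Fin m → ℂ)
    (ha : ∑ i, ‖a i‖ ^ 2 = 1) (hb : ∑ i, ‖b i‖ ^ 2 = 1) :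
    ∃ U ∈ Matrix.unitaryGroup (Fin m) ℂ, U.mulVec a = b ∧
      ∀ μ ∈ spectrum ℂ (U : Matrix (Fin m) (Fin m) ℂ), μ = 1 ∨
        μ = Complex.exp ((Real.arccos ((∑ i, (starRingEnd ℂ) (a i) * b i).re) : ℂ) * Complex.I) ∨
        μ = Complex.exp (-(Real.arccos ((∑ i, (starRingEnd ℂ) (a i) * b i).re) : ℂ) * Complex.I) := by
  classical
  have habs : ∀ x : ℂ, (starRingEnd ℂ) x * x = ((‖x‖ ^ 2 : ℝ) : ℂ) := by
    intro x; rw [mul_comm, Complex.mul_conj, Complex.sq_norm]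
  have haa : ∑ i, (starRingEnd ℂ) (a i) * a i = 1 := by
    calc ∑ i, (starRingEnd ℂ) (a i) * a i = ∑ i, ((‖a i‖ ^ 2 : ℝ) : ℂ) :=
          Finset.sum_congr rfl fun i _ => habs (a i)
      _ = 1 := by rw [← Complex.ofReal_sum, ha, Complex.ofReal_one]
  have hbb : ∑ i, (starRingEnd ℂ) (b i) * b i = 1 := by
    calc ∑ i, (starRingEnd ℂ) (b i) * b i = ∑ i, ((‖b i‖ ^ 2 : ℝ) : ℂ) :=
          Finset.sum_congr rfl fun i _ => habs (b i)
      _ = 1 := by rw [← Complex.ofReal_sum, hb, Complex.ofReal_one]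
  set c := ∑ i, (starRingEnd ℂ) (a i) * b i with hc
  -- construct the orthonormal companion v and coefficient β with b = c • a + β • v
  obtain ⟨v, β, hvv, hav, hbeq⟩ : ∃ (v : Fin m → ℂ) (β : ℂ),
      (∑ i, (starRingEnd ℂ) (v i) * v i = 1) ∧ (∑ i, (starRingEnd ℂ) (a i) * v i = 0) ∧
      b = fun i => c * a i + β * v i := by
    by_cases hd : ∀ i, b i - c * a i = 0
    · -- degenerate case : b is a multiple of a; pick any unit vector orthogonal to a
      obtain ⟨j, hj⟩ : ∃ j, a j ≠ 0 := by
        by_contra h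
        push_neg at h
        rw [Finset.sum_congr rfl (fun i _ => by rw [h i, map_zero, zero_mul])] at haa
        simp at haa
      set k : Fin m := if (j : ℕ) = 0 then ⟨1, by omega⟩ else ⟨0, by omega⟩ with hk
      have hjk : j ≠ k := by
        have hkv : (k : ℕ) = if (j:ℕ) = 0 then 1 else 0 := by rw [hk]; split <;> rfl
        intro h
        rw [← h] at hkv
        split at hkv <;> omega
      have two : ∀ f : Fin m → ℂ, (∀ i, i ≠ j → i ≠ k → f i = 0) → (∑ i, f i) = f j + f k := by
        intro f hf
        have hsub : ∑ i ∈ ({j, k} : Finset (Fin m)), f i = ∑ i, f i := by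
          refine Finset.sum_subset (Finset.subset_univ _) ?_
          intro i _ hi
          simp only [Finset.mem_insert, Finset.mem_singleton] at hi
          push_neg at hi
          exact hf i hi.1 hi.2
        rw [← hsub, Finset.sum_insert (by simpa using hjk), Finset.sum_singleton]
      have hspos : 0 < Complex.normSq (a j) + Complex.normSq (a k) :=
        add_pos_of_pos_of_nonneg (Complex.normSq_pos.mpr hj) (Complex.normSq_nonneg _)
      set t : ℝ := Real.sqrt (Complex.normSq (a j) + Complex.normSq (a k)) with htdef
      have htpos : 0 < t := Real.sqrt_pos.mpr hspos
      have htne : (t:ℂ) ≠ 0 := by exact_mod_cast htpos.ne'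
      have ht2 : (t:ℂ) * (t:ℂ) = ((Complex.normSq (a j) : ℂ) + (Complex.normSq (a k) : ℂ)) := by
        rw [← Complex.ofReal_mul, ← Complex.ofReal_add, htdef, Real.mul_self_sqrt hspos.le]
      set w : Fin m → ℂ := fun i => if i = j then (starRingEnd ℂ) (a k)
        else if i = k then -(starRingEnd ℂ) (a j) else 0 with hw
      have hkj : k ≠ j := fun h => hjk h.symm
      have hwj : w j = (starRingEnd ℂ) (a k) := by simp [hw]
      have hwk : w k = -(starRingEnd ℂ) (a j) := by simp [hw, hkj]
      refine ⟨fun i => (t:ℂ)⁻¹ * w i, 0, ?_, ?_, ?_⟩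
      · rw [two _ (fun i h1 h2 => by simp [hw, h1, h2])]
        simp only [hwj, hwk]
        simp only [_root_.map_mul, map_neg, Complex.conj_conj, map_inv₀, Complex.conj_ofReal]
        field_simp
        linear_combination Complex.mul_conj (a k) + Complex.mul_conj (a j) - ht2
      · rw [two _ (fun i h1 h2 => by simp [hw, h1, h2])]
        simp only [hwj, hwk]
        ring
      · funext i
        have := hd i
        linear_combination this
    · push_neg at hd
      obtain ⟨j0, hj0⟩ := hd
      set d : Fin m → ℂ := fun i => b i - c * a i with hdd
      set r : ℝ := ∑ i, Complex.normSq (d i) with hr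
      have hrpos : 0 < r := by
        rw [hr]
        refine Finset.sum_pos' (fun i _ => Complex.normSq_nonneg _)
          ⟨j0, Finset.mem_univ _, Complex.normSq_pos.mpr ?_⟩
        simpa [hdd] using hj0
      set t : ℝ := Real.sqrt r with htdef
      have htpos : 0 < t := Real.sqrt_pos.mpr hrpos
      have htne : (t:ℂ) ≠ 0 := by exact_mod_cast htpos.ne'
      have ht2 : (t:ℂ) * (t:ℂ) = (r : ℂ) := by
        rw [← Complex.ofReal_mul, htdef, Real.mul_self_sqrt hrpos.le]
      have hdd2 : ∑ i, (starRingEnd ℂ) (d i) * d i = (r : ℂ) := by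
        rw [hr]
        push_cast
        exact Finset.sum_congr rfl fun i _ => by rw [mul_comm, Complex.mul_conj]
      have had : ∑ i, (starRingEnd ℂ) (a i) * d i = 0 := by
        have e : ∑ i, (starRingEnd ℂ) (a i) * d i
            = (∑ i, (starRingEnd ℂ) (a i) * b i) - c * ∑ i, (starRingEnd ℂ) (a i) * a i := by
          rw [Finset.mul_sum, ← Finset.sum_sub_distrib]
          exact Finset.sum_congr rfl fun i _ => by rw [hdd]; ring
        rw [e, haa, ← hc]; ring
      refine ⟨fun i => (t:ℂ)⁻¹ * d i, (t:ℂ), ?_, ?_, ?_⟩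
      · have e : ∑ i, (starRingEnd ℂ) ((t:ℂ)⁻¹ * d i) * ((t:ℂ)⁻¹ * d i)
            = ((t:ℂ)⁻¹ * (t:ℂ)⁻¹) * ∑ i, (starRingEnd ℂ) (d i) * d i := by
          rw [Finset.mul_sum]
          refine Finset.sum_congr rfl fun i _ => ?_
          simp only [_root_.map_mul, map_inv₀, Complex.conj_ofReal]
          ring
        rw [e, hdd2, ← ht2]
        field_simp
      · have e : ∑ i, (starRingEnd ℂ) (a i) * ((t:ℂ)⁻¹ * d i)
            = (t:ℂ)⁻¹ * ∑ i, (starRingEnd ℂ) (a i) * d i := by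
          rw [Finset.mul_sum]
          exact Finset.sum_congr rfl fun i _ => by ring
        rw [e, had, mul_zero]
      · funext i
        have : d i = b i - c * a i := by rw [hdd]
        field_simp
        linear_combination (t:ℂ) * this
  -- normalization identity
  have hva : ∑ i, (starRingEnd ℂ) (v i) * a i = 0 := by
    have h1 : ∑ i, (starRingEnd ℂ) (v i) * a i
        = (starRingEnd ℂ) (∑ i, (starRingEnd ℂ) (a i) * v i) := by
      rw [map_sum]
      exact Finset.sum_congr rfl fun i _ => by simp [mul_comm]
    rw [h1, hav, map_zero]
  have hn : c * (starRingEnd ℂ) c + β * (starRingEnd ℂ) β = 1 := by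
    have e1 : (1:ℂ) = ∑ i, (starRingEnd ℂ) (b i) * b i := hbb.symm
    rw [hbeq] at e1
    have e2 : ∑ i, (starRingEnd ℂ) (c * a i + β * v i) * (c * a i + β * v i)
        = (c * (starRingEnd ℂ) c) * (∑ i, (starRingEnd ℂ) (a i) * a i)
        + ((starRingEnd ℂ) c * β) * (∑ i, (starRingEnd ℂ) (a i) * v i)
        + (c * (starRingEnd ℂ) β) * (∑ i, (starRingEnd ℂ) (v i) * a i)
        + (β * (starRingEnd ℂ) β) * (∑ i, (starRingEnd ℂ) (v i) * v i) := by
      rw [Finset.mul_sum, Finset.mul_sum, Finset.mul_sum, Finset.mul_sum,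
        ← Finset.sum_add_distrib, ← Finset.sum_add_distrib, ← Finset.sum_add_distrib]
      refine Finset.sum_congr rfl fun i _ => ?_
      simp only [_root_.map_add, _root_.map_mul]
      ring
    rw [e2, haa, hav, hva, hvv] at e1
    linear_combination -e1
  -- bounds on the real part
  have hnr : Complex.normSq c + Complex.normSq β = 1 := by
    have e := hn
    rw [Complex.mul_conj, Complex.mul_conj, ← Complex.ofReal_add] at e
    exact_mod_cast e
  rw [Complex.normSq_apply] at hnr
  have hre1 : -1 ≤ c.re := by
    nlinarith [Complex.normSq_nonneg β, mul_self_nonneg c.im, sq_nonneg (c.re + 1)]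
  have hre2 : c.re ≤ 1 := by
    nlinarith [Complex.normSq_nonneg β, mul_self_nonneg c.im, sq_nonneg (c.re - 1)]
  set θ : ℝ := Real.arccos c.re with hθ
  set r₂ : ℂ := Complex.exp ((θ:ℂ) * Complex.I) with hr₂
  set r₃ : ℂ := Complex.exp (-(θ:ℂ) * Complex.I) with hr₃
  have hcos : Complex.cos (θ:ℂ) = ((c.re : ℝ) : ℂ) := by
    rw [← Complex.ofReal_cos, hθ, Real.cos_arccos hre1 hre2]
  have hsum : r₂ + r₃ = c + (starRingEnd ℂ) c := by
    rw [hr₂, hr₃, Complex.exp_mul_I, Complex.exp_mul_I, Complex.add_conj,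
      Complex.cos_neg, Complex.sin_neg, hcos]
    push_cast
    ring
  have hprod : r₂ * r₃ = 1 := by
    rw [hr₂, hr₃, ← Complex.exp_add,
      show (θ:ℂ) * Complex.I + -(θ:ℂ) * Complex.I = 0 by ring, Complex.exp_zero]
  obtain ⟨U, hUuni, hUa, hUpoly⟩ := key a v c β r₂ r₃ haa hvv hav hn hsum hprod
  refine ⟨U, hUuni, by rw [hUa, ← hbeq], ?_⟩
  intro μ hμ
  haveI : Nonempty (Fin m) := ⟨⟨0, by omega⟩⟩
  haveI : Nontrivial (Matrix (Fin m) (Fin m) ℂ) := inferInstance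
  set P : Polynomial ℂ := (X - C r₂) * ((X - C r₃) * (X - C 1)) with hP
  have haev : (Polynomial.aeval U) P = 0 := by
    rw [hP]
    simp only [_root_.map_mul, _root_.map_sub, Polynomial.aeval_X, Polynomial.aeval_C,
      Algebra.algebraMap_eq_smul_one, one_smul]
    exact hUpoly
  have hev : Polynomial.eval μ P = 0 := by
    have hmem : Polynomial.eval μ P ∈ spectrum ℂ ((Polynomial.aeval U) P) :=
      spectrum.subset_polynomial_aeval U P ⟨μ, hμ, rfl⟩
    rwa [haev, spectrum.zero_eq, Set.mem_singleton_iff] at hmem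
  rw [hP] at hev
  simp only [Polynomial.eval_mul, Polynomial.eval_sub, Polynomial.eval_X, Polynomial.eval_C] at hev
  rcases mul_eq_zero.mp hev with h | h
  · exact Or.inr (Or.inl (sub_eq_zero.mp h))
  rcases mul_eq_zero.mp h with h' | h'
  · exact Or.inr (Or.inr (sub_eq_zero.mp h'))
  · exact Or.inl (sub_eq_zero.mp h')
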